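/- Let p > 3 be a prime. Then 3^{p-1}·∑_{k=0}^{p-1} 3^{p-1-k}·T(k,0) ≡ 3^{2(p-1)}·p (mod p^2) if p ≡ 1 (mod 3), and ≡ 0 (mod p^2) if p ≡ 2 (mod 3); equivalently, ∑_{k=0}^{p-1} T(k,0)/3^k ≡ p or 0 (mod p^2) respectively, where the division by 3^k is interpreted in Z/p^2Z (3 is invertible mod p^2). -/

import Mathlib

/-- The trinomial coefficient `T n m`: the coefficient of `x^(n+m)` in `(1+x+x^2)^n`. -/
noncomputable def trinomial (n m : ℕ) : ℤ :=
  Polynomial.coeff ((1 + Polynomial.X + Polynomial.X ^ 2 : Polynomial ℤ) ^ n) (n + m)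

open Polynomial Finset

variable {R : Type*} [CommRing R]

lemma coeff_f_mul (q : R[X]) (k : ℕ) :
    ((1 + X + X ^ 2 : R[X]) * q).coeff (k + 2) =
      q.coeff (k + 2) + q.coeff (k + 1) + q.coeff k := by
  simp [add_mul, coeff_add, one_mul, pow_two, mul_assoc,
    show k + 2 = (k+1)+1 from rfl, coeff_X_mul]

lemma coeff_f_mul_one (q : R[X]) :
    ((1 + X + X ^ 2 : R[X]) * q).coeff 1 = q.coeff 1 + q.coeff 0 := by
  have h2 : ((X^2 : R[X]) * q).coeff 1 = 0 := by
    rw [pow_two, mul_assoc]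
    rw [show (1:ℕ) = 0+1 from rfl, coeff_X_mul, mul_coeff_zero]
    simp
  have h1 : ((X : R[X]) * q).coeff 1 = q.coeff 0 := by
    rw [show (1:ℕ) = 0+1 from rfl, coeff_X_mul]
  simp [add_mul, coeff_add, one_mul, h2, h1]

lemma coeff_f_mul_zero (q : R[X]) :
    ((1 + X + X ^ 2 : R[X]) * q).coeff 0 = q.coeff 0 := by
  rw [mul_coeff_zero]; simp

lemma coeff_f_pow_zero (n : ℕ) : ((1 + X + X ^ 2 : R[X]) ^ n).coeff 0 = 1 := by
  induction n with
  | zero => simp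
  | succ n ih => rw [pow_succ, mul_comm, coeff_f_mul_zero, ih]

lemma coeff_f_pow_one (n : ℕ) : ((1 + X + X ^ 2 : R[X]) ^ n).coeff 1 = n := by
  induction n with
  | zero => simp [coeff_one]
  | succ n ih => rw [pow_succ, mul_comm, coeff_f_mul_one, ih, coeff_f_pow_zero]; push_cast; ring

lemma natDegree_f_le : (1 + X + X ^ 2 : R[X]).natDegree ≤ 2 := by
  apply (natDegree_add_le _ _).trans
  apply max_le _ (natDegree_X_pow_le 2)
  apply (natDegree_add_le _ _).trans
  exact max_le (by simp) natDegree_X_le |>.trans (by norm_num)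

lemma reflect_f : reflect 2 (1 + X + X ^ 2 : R[X]) = (1 + X + X ^ 2 : R[X]) := by
  ext i
  rw [coeff_reflect]
  rcases i with _|_|_|i <;> simp [revAt_eq_self_of_lt, Function.Embedding.coeFn_mk, coeff_one, coeff_X, coeff_X_pow]

lemma reflect_f_pow (n : ℕ) :
    reflect (2 * n) ((1 + X + X ^ 2 : R[X]) ^ n) = (1 + X + X ^ 2 : R[X]) ^ n := by
  induction n with
  | zero => simp
  | succ n ih =>
    rw [pow_succ, show 2 * (n+1) = 2*n + 2 from rfl,
      reflect_mul _ _ ((natDegree_pow_le).trans (by nlinarith [natDegree_f_le (R := R)])) natDegree_f_le,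
      ih, reflect_f, pow_succ]

lemma coeff_f_pow_symm (n k : ℕ) (hk : k ≤ 2 * n) :
    ((1 + X + X ^ 2 : R[X]) ^ n).coeff k = ((1 + X + X ^ 2 : R[X]) ^ n).coeff (2 * n - k) := by
  conv_lhs => rw [← reflect_f_pow n, coeff_reflect]
  rw [revAt_le hk]

/-- key contiguous relation from `f * (f^(n+1))' = (n+1) * f' * f^(n+1)` -/
lemma L4 (n j : ℕ) :
    ((j:R) + 2) * ((1 + X + X ^ 2 : R[X]) ^ (n+1)).coeff (j+2)
      + ((j:R) + 1) * ((1 + X + X ^ 2 : R[X]) ^ (n+1)).coeff (j+1)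
      + (j:R) * ((1 + X + X ^ 2 : R[X]) ^ (n+1)).coeff j
    = ((n:R) + 1) * (((1 + X + X ^ 2 : R[X]) ^ (n+1)).coeff (j+1)
        + 2 * ((1 + X + X ^ 2 : R[X]) ^ (n+1)).coeff j) := by
  set f : R[X] := 1 + X + X ^ 2 with hf
  set q : R[X] := f ^ (n+1) with hq
  have hdf : derivative f = 1 + C 2 * (X : R[X]) := by
    rw [hf, derivative_add, derivative_add, derivative_one, derivative_X, derivative_X_pow]
    norm_num
  have hder : f * derivative q = C ((n:R)+1) * (q + C 2 * ((X:R[X]) * q)) := by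
    rw [hq, derivative_pow_succ, hdf]
    ring
  have key := congrArg (fun P => Polynomial.coeff P (j+1)) hder
  rw [coeff_C_mul, coeff_add, coeff_C_mul, coeff_X_mul] at key
  cases j with
  | zero =>
    rw [coeff_f_mul_one, coeff_derivative, coeff_derivative] at key
    push_cast at key ⊢
    linear_combination key
  | succ i =>
    rw [show i + 1 + 1 = i + 2 from rfl, coeff_f_mul, coeff_derivative, coeff_derivative,
      coeff_derivative] at key
    push_cast at key ⊢
    linear_combination key

-- the central coefficient
lemma trin_eq (n : ℕ) : trinomial n 0 = ((1 + X + X ^ 2 : ℤ[X]) ^ n).coeff n := rfl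

lemma T0 : trinomial 0 0 = 1 := by rw [trin_eq]; simpa using coeff_f_pow_zero (R := ℤ) 0
lemma T1 : trinomial 1 0 = 1 := by rw [trin_eq]; simpa using coeff_f_pow_one (R := ℤ) 1

lemma c21 : ((1 + X + X ^ 2 : ℤ[X]) ^ 2).coeff 1 = 2 := by simpa using coeff_f_pow_one (R := ℤ) 2
lemma c22 : ((1 + X + X ^ 2 : ℤ[X]) ^ 2).coeff 2 = 3 := by
  rw [pow_two, show (2:ℕ) = 0 + 2 from rfl, coeff_f_mul]
  have h0 := coeff_f_pow_one (R := ℤ) 1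
  have h1 := coeff_f_pow_zero (R := ℤ) 1
  simp only [pow_one] at h0 h1
  rw [h0, h1]
  have : ((1 + X + X ^ 2 : ℤ[X])).coeff 2 = 1 := by
    simp [coeff_add, coeff_one, coeff_X, coeff_X_pow]
  rw [this]; norm_num
lemma c23 : ((1 + X + X ^ 2 : ℤ[X]) ^ 2).coeff 3 = 2 := by
  rw [coeff_f_pow_symm 2 3 (by norm_num), show 2*2-3 = 1 from rfl, c21]
lemma T2 : trinomial 2 0 = 3 := by rw [trin_eq]; exact c22
lemma T3 : trinomial 3 0 = 7 := by
  rw [trin_eq, pow_succ, mul_comm, show (3:ℕ) = 1 + 2 from rfl, coeff_f_mul, c23, c22, c21]; norm_num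

/-- The three-term recurrence for central trinomial coefficients. -/
lemma REC (m : ℕ) :
    ((m:ℤ) + 2) * trinomial (m+2) 0 = (2*m+3) * trinomial (m+1) 0 + (3*m+3) * trinomial m 0 := by
  rcases m with _|_|i
  · rw [T2, T1, T0]; norm_num
  · rw [T3, T2, T1]; norm_num
  · -- general case, n = i+3
    set f : ℤ[X] := 1 + X + X ^ 2 with hf
    have E1 : (f^(i+4)).coeff (i+4) =
        (f^(i+3)).coeff (i+4) + (f^(i+3)).coeff (i+3) + (f^(i+3)).coeff (i+2) := by
      rw [pow_succ, mul_comm, show i+4 = (i+2)+2 from rfl, coeff_f_mul]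
    have E1s : (f^(i+3)).coeff (i+4) = (f^(i+3)).coeff (i+2) := by
      rw [coeff_f_pow_symm (i+3) (i+4) (by omega), show 2*(i+3)-(i+4) = i+2 by omega]
    have E2 : (f^(i+3)).coeff (i+3) =
        (f^(i+2)).coeff (i+3) + (f^(i+2)).coeff (i+2) + (f^(i+2)).coeff (i+1) := by
      rw [pow_succ, mul_comm, show i+3 = (i+1)+2 from rfl, coeff_f_mul]
    have E2s : (f^(i+2)).coeff (i+3) = (f^(i+2)).coeff (i+1) := by
      rw [coeff_f_pow_symm (i+2) (i+3) (by omega), show 2*(i+2)-(i+3) = i+1 by omega]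
    have E3 : (f^(i+3)).coeff (i+2) =
        (f^(i+2)).coeff (i+2) + (f^(i+2)).coeff (i+1) + (f^(i+2)).coeff i := by
      rw [pow_succ, mul_comm, show i+2 = i+2 from rfl, coeff_f_mul]
    have E4 := L4 (R := ℤ) (i+1) i
    rw [show i+1+1 = i+2 from rfl] at E4
    push_cast at E4
    rw [trin_eq, trin_eq, trin_eq, ← hf]
    push_cast
    linear_combination ((i:ℤ)+4)*E1 + ((i:ℤ)+4)*E1s - ((i:ℤ)+3)*E2 - ((i:ℤ)+3)*E2s
      + (2*(i:ℤ)+8)*E3 - 2*E4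

/-- The key partial-sum identity: `2 ∑_{k≤n} 3^(n-k) T_k = (n+1)(T_{n+1} + T_n)`. -/
lemma partial_sum_identity (n : ℕ) :
    2 * (∑ k ∈ range (n+1), 3^(n-k) * trinomial k 0)
      = ((n:ℤ)+1) * (trinomial (n+1) 0 + trinomial n 0) := by
  induction n with
  | zero => simp [T0, T1]
  | succ n ih =>
    rw [Finset.sum_range_succ]
    have hpow : ∀ k ∈ range (n+1), (3:ℤ)^(n+1-k) * trinomial k 0
        = 3 * (3^(n-k) * trinomial k 0) := by
      intro k hk
      rw [Finset.mem_range] at hk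
      rw [show n+1-k = (n-k)+1 by omega, pow_succ]
      ring
    rw [Finset.sum_congr rfl hpow, ← Finset.mul_sum,
      show n+1-(n+1) = 0 from by omega, pow_zero, show n+1+1 = n+2 from rfl]
    have hrec := REC n
    push_cast
    push_cast at ih
    linear_combination 3 * ih - hrec

lemma trin_cast (q n : ℕ) :
    ((trinomial n 0 : ℤ) : ZMod q) = ((1 + X + X ^ 2 : (ZMod q)[X]) ^ n).coeff n := by
  have : ((1 + X + X ^ 2 : (ZMod q)[X]) ^ n)
      = Polynomial.map (Int.castRingHom (ZMod q)) ((1 + X + X ^ 2 : ℤ[X]) ^ n) := by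
    simp [Polynomial.map_pow, Polynomial.map_add, Polynomial.map_one, Polynomial.map_X]
  rw [this, Polynomial.coeff_map]
  rfl

lemma frob (p : ℕ) [Fact p.Prime] :
    (1 + X + X ^ 2 : (ZMod p)[X]) ^ p = 1 + X ^ p + X ^ (2 * p) := by
  rw [add_pow_char, add_pow_char, one_pow, ← pow_mul, mul_comm 2 p, mul_comm p 2]

/-- the mod-3 pattern -/
def chi (p m : ℕ) : ZMod p := if m % 3 = 0 then 1 else if m % 3 = 1 then -1 else 0

lemma g_pattern (p : ℕ) [Fact p.Prime] (hp3 : 3 < p) :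
    ∀ m, m ≤ p - 1 → ((1 + X + X ^ 2 : (ZMod p)[X]) ^ (p-1)).coeff m = chi p m := by
  intro m
  induction m using Nat.strong_induction_on with
  | _ m ih =>
    match m with
    | 0 => intro _; rw [coeff_f_pow_zero]; simp [chi]
    | 1 =>
      intro _
      rw [coeff_f_pow_one, chi]
      norm_num
      rw [Nat.cast_sub (by omega), ZMod.natCast_self]
      norm_num
    | (k+2) =>
      intro hm
      have h1 := ih (k+1) (by omega) (by omega)
      have h0 := ih k (by omega) (by omega)
      have hrec : ((1 + X + X ^ 2 : (ZMod p)[X]) ^ (p-1)).coeff (k+2)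
          + ((1 + X + X ^ 2 : (ZMod p)[X]) ^ (p-1)).coeff (k+1)
          + ((1 + X + X ^ 2 : (ZMod p)[X]) ^ (p-1)).coeff k = 0 := by
        have hpow : (1 + X + X ^ 2 : (ZMod p)[X]) * (1 + X + X ^ 2 : (ZMod p)[X]) ^ (p-1)
            = 1 + X ^ p + X ^ (2*p) := by
          rw [← frob p, ← pow_succ']
          congr 1
          omega
        have := congrArg (fun P => Polynomial.coeff P (k+2)) hpow
        rw [coeff_f_mul] at this
        rw [this]
        have h2p : 2 ≤ 2 * p := by omega
        rw [coeff_add, coeff_add, coeff_one, coeff_X_pow, coeff_X_pow]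
        have : ¬ (k + 2 = 0) := by omega
        have : ¬ (k + 2 = p) := by omega
        have : ¬ (k + 2 = 2*p) := by omega
        simp_all
      have : ((1 + X + X ^ 2 : (ZMod p)[X]) ^ (p-1)).coeff (k+2) = -(chi p (k+1) + chi p k) := by
        rw [← h1, ← h0]; linear_combination hrec
      rw [this]
      simp only [chi]
      rcases (by omega : k % 3 = 0 ∨ k % 3 = 1 ∨ k % 3 = 2) with h|h|h
      · rw [show (k+2)%3 = 2 by omega, show (k+1)%3 = 1 by omega, h]; norm_num
      · rw [show (k+2)%3 = 0 by omega, show (k+1)%3 = 2 by omega, h]; norm_num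
      · rw [show (k+2)%3 = 1 by omega, show (k+1)%3 = 0 by omega, h]; norm_num

lemma Tp_mod (p : ℕ) [Fact p.Prime] (hp3 : 3 < p) :
    ((trinomial p 0 : ℤ) : ZMod p) = 1 := by
  rw [trin_cast, frob p, coeff_add, coeff_add, coeff_one, coeff_X_pow, coeff_X_pow]
  have h1 : ¬ (p = 0) := by omega
  have h2 : ¬ (p = 2 * p) := by omega
  simp [h1, h2]

lemma Tp1_mod (p : ℕ) [Fact p.Prime] (hp3 : 3 < p) :
    ((trinomial (p-1) 0 : ℤ) : ZMod p) = chi p (p-1) := by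
  rw [trin_cast]
  exact g_pattern p hp3 (p-1) le_rfl

/-- lifting: if a ≡ b mod p then p*a = p*b in ZMod p². -/
lemma lift_lemma (p : ℕ) (hp : 0 < p) (a b : ℤ) (h : ((a : ZMod p) = (b : ZMod p))) :
    (p : ZMod (p^2)) * (a : ZMod (p^2)) = (p : ZMod (p^2)) * (b : ZMod (p^2)) := by
  rw [ZMod.intCast_eq_intCast_iff] at h
  obtain ⟨t, ht⟩ := Int.ModEq.dvd h   -- (p:ℤ) ∣ b - a
  have key : ((p : ℤ) * (b - a) : ℤ) = (p:ℤ)^2 * t := by rw [ht]; ring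
  have : (((p : ℤ) * (b - a) : ℤ) : ZMod (p^2)) = 0 := by
    rw [key]
    push_cast
    have hz : ((p:ZMod (p^2)))^2 = 0 := by
      rw [← Nat.cast_pow, ZMod.natCast_self]
    rw [hz]
    ring
  push_cast at this
  linear_combination -this

theorem stmt8 (p : ℕ) (hp : p.Prime) (hp3 : 3 < p) :
    (∑ k ∈ Finset.range p, (trinomial k 0 : ZMod (p ^ 2)) * ((3 : ZMod (p ^ 2))⁻¹) ^ k) =
      if p % 3 = 1 then (p : ZMod (p ^ 2)) else 0 := by
  haveI : Fact p.Prime := ⟨hp⟩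
  have hp0 : 0 < p := by omega
  set N := p ^ 2 with hN
  -- units
  have h3u : IsUnit (3 : ZMod N) := by
    rw [show (3 : ZMod N) = ((3:ℕ) : ZMod N) by push_cast; ring, ZMod.isUnit_iff_coprime]
    apply Nat.Coprime.pow_right
    rw [Nat.coprime_primes (by norm_num) hp]
    omega
  have h2u : IsUnit (2 : ZMod N) := by
    rw [show (2 : ZMod N) = ((2:ℕ) : ZMod N) by push_cast; ring, ZMod.isUnit_iff_coprime]
    apply Nat.Coprime.pow_right
    rw [Nat.coprime_primes (by norm_num) hp]
    omega
  -- the integer identity at n = p-1, cast into ZMod N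
  have hid := partial_sum_identity (p-1)
  rw [show p - 1 + 1 = p by omega] at hid
  have hidN := congrArg (fun z : ℤ => (z : ZMod N)) hid
  push_cast at hidN
  -- rewrite each 3^(p-1-k) as 3^(p-1) * (3⁻¹)^k
  have hterm : ∀ k ∈ Finset.range p, (3:ZMod N)^(p-1-k) * (trinomial k 0 : ℤ)
      = 3^(p-1) * ((trinomial k 0 : ZMod N) * ((3 : ZMod N)⁻¹) ^ k) := by
    intro k hk
    rw [Finset.mem_range] at hk
    have : (3:ZMod N)^(p-1) = 3^(p-1-k) * 3^k := by
      rw [← pow_add]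
      congr 1
      omega
    rw [this, mul_assoc, mul_comm ((3:ZMod N)^k), mul_assoc, ← mul_pow]
    rw [ZMod.inv_mul_of_unit _ h3u]
    ring
  rw [Finset.sum_congr rfl hterm, ← Finset.mul_sum] at hidN
  set S := ∑ k ∈ Finset.range p, (trinomial k 0 : ZMod N) * ((3 : ZMod N)⁻¹) ^ k with hS
  rw [show ((p-1 : ℕ) : ZMod N) + 1 = (p : ZMod N) by rw [Nat.cast_sub (by omega)]; push_cast; ring]
    at hidN
  -- hidN : 2 * (3^(p-1) * S) = p * (T_p + T_{p-1})
  have hp3mod : p % 3 = 1 ∨ p % 3 = 2 := by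
    rcases (by omega : p % 3 = 0 ∨ p % 3 = 1 ∨ p % 3 = 2) with h|h|h
    · exfalso
      have : (3:ℕ) ∣ p := Nat.dvd_of_mod_eq_zero h
      rcases (Nat.Prime.eq_one_or_self_of_dvd hp 3 this) with h'|h' <;> omega
    · left; exact h
    · right; exact h
  set εZ : ℤ := if p % 3 = 1 then 2 else 0 with hε
  have hmod : ((_root_.trinomial p 0 + _root_.trinomial (p-1) 0 : ℤ) : ZMod p) = (εZ : ZMod p) := by
    push_cast
    rw [Tp_mod p hp3, Tp1_mod p hp3, chi]
    rcases hp3mod with h|h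
    · rw [show (p-1) % 3 = 0 by omega, hε, if_pos h, if_pos rfl]
      push_cast; norm_num
    · rw [show (p-1) % 3 = 1 by omega, hε]
      simp only [if_neg (show ¬ p % 3 = 1 by omega)]
      norm_num
  have hlift := lift_lemma p hp0 _ _ hmod
  push_cast at hlift
  have hu : IsUnit ((2:ZMod N) * 3^(p-1)) := h2u.mul (h3u.pow _)
  haveI : Fact (1 < N) := ⟨by rw [hN]; nlinarith⟩
  have h3ne : (3 : ZMod p) ≠ 0 := by
    rw [show (3 : ZMod p) = ((3:ℕ) : ZMod p) by push_cast; ring, Ne,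
      ZMod.natCast_eq_zero_iff]
    intro h
    have := Nat.le_of_dvd (by norm_num) h
    omega
  have hF : (((2 * 3^(p-1) : ℤ)) : ZMod p) = ((2:ℤ) : ZMod p) := by
    push_cast
    rw [ZMod.pow_card_sub_one_eq_one h3ne]
    norm_num
  have hlift2 := lift_lemma p hp0 _ _ hF
  push_cast at hlift2
  -- main equation: u * S = p * εZ
  have hmain : (2:ZMod N) * 3^(p-1) * S = (p : ZMod N) * (εZ : ZMod N) := by
    rw [← hlift]
    rw [← mul_assoc] at hidN
    linear_combination hidN
  by_cases hc : p % 3 = 1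
  · rw [if_pos hc]
    have hε2 : (εZ : ZMod N) = 2 := by rw [hε, if_pos hc]; push_cast; ring
    apply hu.mul_left_cancel
    rw [hmain, hε2]
    calc (p : ZMod N) * 2 = (p:ZMod N) * (2 * 3^(p-1)) := by rw [hlift2]
      _ = 2 * 3^(p-1) * p := by ring
  · rw [if_neg hc]
    have hε0 : (εZ : ZMod N) = 0 := by rw [hε, if_neg hc]; push_cast; ring
    rw [hε0, mul_zero] at hmain
    exact (IsUnit.mul_right_eq_zero hu).mp hmain
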